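/- Let S ≥ 2, utilities u₁ ≤ ... ≤ u_S, objective probabilities p_s summing to 1, and let q_s be subjective probabilities summing to 1 with subjective expectation m = Σ_s q_s u_s. Let A = {s : u_s ≥ m} and suppose Σ_{s∈A} p_s = P* = (ηλ−1)/(η(λ−1)). Then the total utility U = m + η[Σ_{s∈A} p_s (u_s − m) + λ Σ_{s∉A} p_s (u_s − m)] equals η[Σ_{s∈A} p_s u_s + λ Σ_{s∉A} p_s u_s]; in particular U does not depend on the anticipation m (only on the induced partition A). -/

import Mathlib

open Finset

/-- When the gain-region objective probability equals the cutoff P*, total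
utility equals η[Σ_{A} p_s u_s + λ Σ_{Aᶜ} p_s u_s], independent of the
anticipation m. -/
theorem stmt_7 (S : ℕ) (hS : 2 ≤ S) (lam eta : ℝ) (hlam : 1 < lam)
    (heta0 : 0 < eta) (heta1 : eta ≤ 1)
    (u p : Fin S → ℝ) (hu_mono : Monotone u)
    (hp_sum : ∑ s, p s = 1)
    (q : Fin S → ℝ) (hq_nonneg : ∀ s, 0 ≤ q s) (hq_sum : ∑ s, q s = 1)
    (m : ℝ) (hm : m = ∑ s, q s * u s)
    (A : Finset (Fin S)) (hA : A = Finset.univ.filter (fun s => m ≤ u s))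
    (hcut : ∑ s ∈ A, p s = (eta * lam - 1) / (eta * (lam - 1)))
    (U : ℝ) (hU : U = m + eta * ((∑ s ∈ A, p s * (u s - m)) +
      lam * ∑ s ∈ Aᶜ, p s * (u s - m))) :
    U = eta * ((∑ s ∈ A, p s * u s) + lam * ∑ s ∈ Aᶜ, p s * u s) := by
  have hPc : ∑ s ∈ Aᶜ, p s = 1 - ∑ s ∈ A, p s := by
    have := Finset.sum_add_sum_compl A p
    rw [hp_sum] at this
    linarith
  have hden : eta * (lam - 1) ≠ 0 := by exact mul_ne_zero (ne_of_gt heta0) (sub_ne_zero.mpr (ne_of_gt hlam))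
  have hcut' : (∑ s ∈ A, p s) * (eta * (lam - 1)) = eta * lam - 1 := by
    field_simp at hcut
    rw [← mul_assoc, hcut]
    exact div_mul_cancel₀ _ (sub_ne_zero.mpr (ne_of_gt hlam))
  have e1 : ∑ s ∈ A, p s * (u s - m) = (∑ s ∈ A, p s * u s) - (∑ s ∈ A, p s) * m := by
    rw [Finset.sum_mul]
    rw [← Finset.sum_sub_distrib]
    congr 1 with s
    ring
  have e2 : ∑ s ∈ Aᶜ, p s * (u s - m) = (∑ s ∈ Aᶜ, p s * u s) - (∑ s ∈ Aᶜ, p s) * m := by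
    rw [Finset.sum_mul, ← Finset.sum_sub_distrib]
    congr 1 with s
    ring
  rw [hU, e1, e2, hPc]
  linear_combination m * hcut'
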